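/- Let p, r ∈ ℂ[X] be polynomials with formal derivatives p', r'. Define F: {(x₁,x₂) ∈ ℂ² : x₂ ≠ 0} → ℂ² by F(x₁,x₂) = (x₁³x₂⁸·p(w), x₁²x₂⁵·(x₁x₂³-1)·r(w)) where w = (x₁x₂³-1)³/x₂. Then the Jacobian determinant of F at (x₁,x₂) equals x₁⁴x₂¹²·( p(w)·r(w) + w·(3p(w)·r'(w) - 2p'(w)·r(w)) ). -/

import Mathlib

open Polynomial

/-- The candidate Keller map of Section 3 of the paper. -/
noncomputable def y₁ (p : ℂ[X]) (x₁ x₂ : ℂ) : ℂ :=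
  x₁ ^ 3 * x₂ ^ 8 * p.eval ((x₁ * x₂ ^ 3 - 1) ^ 3 / x₂)

noncomputable def y₂ (r : ℂ[X]) (x₁ x₂ : ℂ) : ℂ :=
  x₁ ^ 2 * x₂ ^ 5 * (x₁ * x₂ ^ 3 - 1) * r.eval ((x₁ * x₂ ^ 3 - 1) ^ 3 / x₂)

theorem stmt_14 (p r : ℂ[X]) (x₁ x₂ : ℂ) (hx₂ : x₂ ≠ 0) :
    let w : ℂ := (x₁ * x₂ ^ 3 - 1) ^ 3 / x₂
    deriv (fun x => y₁ p x x₂) x₁ * deriv (fun y => y₂ r x₁ y) x₂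
      - deriv (fun y => y₁ p x₁ y) x₂ * deriv (fun x => y₂ r x x₂) x₁
      = x₁ ^ 4 * x₂ ^ 12 *
        (p.eval w * r.eval w
          + w * (3 * p.eval w * (derivative r).eval w - 2 * (derivative p).eval w * r.eval w)) := by
  intro w
  -- inner function w.r.t. x₁
  have hw1 : HasDerivAt (fun x : ℂ => (x * x₂ ^ 3 - 1) ^ 3 / x₂)
      ((↑(3:ℕ) * (x₁ * x₂ ^ 3 - 1) ^ (3-1) * (1 * x₂ ^ 3)) / x₂) x₁ :=
    ((((hasDerivAt_id x₁).mul_const (x₂ ^ 3)).sub_const 1).pow 3).div_const x₂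
  -- inner function w.r.t. x₂
  have hnum : HasDerivAt (fun y : ℂ => (x₁ * y ^ 3 - 1) ^ 3)
      (↑(3:ℕ) * (x₁ * x₂ ^ 3 - 1) ^ (3-1) * (x₁ * (↑(3:ℕ) * x₂ ^ (3-1)))) x₂ :=
    (((hasDerivAt_pow 3 x₂).const_mul x₁).sub_const 1).pow 3
  have hw2 : HasDerivAt (fun y : ℂ => (x₁ * y ^ 3 - 1) ^ 3 / y)
      (((↑(3:ℕ) * (x₁ * x₂ ^ 3 - 1) ^ (3-1) * (x₁ * (↑(3:ℕ) * x₂ ^ (3-1)))) * x₂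
        - (x₁ * x₂ ^ 3 - 1) ^ 3 * 1) / x₂ ^ 2) x₂ :=
    hnum.div (hasDerivAt_id x₂) hx₂
  have hP1 := (p.hasDerivAt w).comp x₁ hw1
  have hP2 := (p.hasDerivAt w).comp x₂ hw2
  have hR1 := (r.hasDerivAt w).comp x₁ hw1
  have hR2 := (r.hasDerivAt w).comp x₂ hw2
  have h1 : HasDerivAt (fun x => y₁ p x x₂) _ x₁ :=
    ((hasDerivAt_pow 3 x₁).mul_const (x₂ ^ 8)).mul hP1
  have h2 : HasDerivAt (fun y => y₂ r x₁ y) _ x₂ :=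
    ((((hasDerivAt_pow 5 x₂).const_mul (x₁ ^ 2)).mul
      (((hasDerivAt_pow 3 x₂).const_mul x₁).sub_const 1)).mul hR2)
  have h3 : HasDerivAt (fun y => y₁ p x₁ y) _ x₂ :=
    ((hasDerivAt_pow 8 x₂).const_mul (x₁ ^ 3)).mul hP2
  have h4 : HasDerivAt (fun x => y₂ r x x₂) _ x₁ :=
    ((((hasDerivAt_pow 2 x₁).mul_const (x₂ ^ 5)).mul
      (((hasDerivAt_id x₁).mul_const (x₂ ^ 3)).sub_const 1)).mul hR1)
  rw [h1.deriv, h2.deriv, h3.deriv, h4.deriv]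
  show _ = x₁ ^ 4 * x₂ ^ 12 *
        (p.eval w * r.eval w
          + w * (3 * p.eval w * (derivative r).eval w - 2 * (derivative p).eval w * r.eval w))
  simp only [Function.comp, w, Pi.mul_apply, id]
  push_cast
  field_simp
  ring
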